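/- Let D : ℝ → ℝ ∪ {−∞} be the double parabola D(h) = 1 − (h+1)² on (−2, 0), D(h) = 1 − (h−1)² on [0, 2], −∞ elsewhere, and for γ ≥ 0 let g_γ(h) = −γ·h². Then the generalized Legendre spectrum L_{g_γ}(h) = (D + g_γ)⋆⋆(h) − g_γ(h) is given by: 1 − (h+1)² for −2 < h < −1/(1+γ); 1/(1+γ) + γ·h² for |h| ≤ 1/(1+γ); and 1 − (h−1)² for 1/(1+γ) < h < 2. -/

import Mathlib

open Filter Set

/-- Multifractal-style Legendre transform (concave convention):
`legStar d f q = ⨅ h, (d + q·h) − f h`. -/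
noncomputable def legStar (d : ℝ) (f : ℝ → EReal) (q : ℝ) : EReal :=
  ⨅ h : ℝ, ((d + q * h : ℝ) : EReal) - f h

/-- Double Legendre transform. -/
noncomputable def legStar2 (d : ℝ) (f : ℝ → EReal) (x : ℝ) : EReal :=
  ⨅ q : ℝ, ((d + q * x : ℝ) : EReal) - legStar d f q

/-- Concave envelope: pointwise infimum of all affine majorants. -/
noncomputable def concEnv (f : ℝ → EReal) (x : ℝ) : EReal :=
  ⨅ p : {p : ℝ × ℝ // ∀ t, f t ≤ ((p.1 * t + p.2 : ℝ) : EReal)},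
    ((p.1.1 * x + p.1.2 : ℝ) : EReal)

noncomputable def doubleParabola : ℝ → EReal := fun h =>
  if -2 < h ∧ h < 0 then ((1 - (h + 1)^2 : ℝ) : EReal)
  else if 0 ≤ h ∧ h ≤ 2 then ((1 - (h - 1)^2 : ℝ) : EReal)
  else ⊥

lemma env_lb (F : ℝ → EReal) (x : ℝ) : F x ≤ concEnv F x :=
  le_iInf fun p => p.2 x

lemma env_ub (F : ℝ → EReal) (m c x : ℝ)
    (maj : ∀ t, F t ≤ ((m * t + c : ℝ) : EReal)) :
    concEnv F x ≤ ((m * x + c : ℝ) : EReal) := by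
  have := iInf_le
    (fun p : {p : ℝ × ℝ // ∀ t, F t ≤ ((p.1 * t + p.2 : ℝ) : EReal)} =>
      ((p.1.1 * x + p.1.2 : ℝ) : EReal)) ⟨(m, c), maj⟩
  exact this

lemma dp_left (γ t : ℝ) (h1 : -2 < t) (h2 : t < 0) :
    doubleParabola t + ((-γ * t^2 : ℝ) : EReal)
      = ((1 - (t + 1)^2 + -γ * t^2 : ℝ) : EReal) := by
  have hp : -2 < t ∧ t < 0 := ⟨h1, h2⟩
  simp only [doubleParabola, if_pos hp, ← EReal.coe_add]

lemma dp_right (γ t : ℝ) (h1 : 0 ≤ t) (h2 : t ≤ 2) :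
    doubleParabola t + ((-γ * t^2 : ℝ) : EReal)
      = ((1 - (t - 1)^2 + -γ * t^2 : ℝ) : EReal) := by
  have : ¬ (-2 < t ∧ t < 0) := by rintro ⟨_, h⟩; linarith
  have hp : 0 ≤ t ∧ t ≤ 2 := ⟨h1, h2⟩
  simp only [doubleParabola, if_neg this, if_pos hp, ← EReal.coe_add]

lemma maj_of (γ m c : ℝ)
    (hl : ∀ t : ℝ, -2 < t → t < 0 → 1 - (t + 1)^2 + -γ * t^2 ≤ m * t + c)
    (hr : ∀ t : ℝ, 0 ≤ t → t ≤ 2 → 1 - (t - 1)^2 + -γ * t^2 ≤ m * t + c) :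
    ∀ t, doubleParabola t + ((-γ * t^2 : ℝ) : EReal) ≤ ((m * t + c : ℝ) : EReal) := by
  intro t
  unfold doubleParabola
  split_ifs with h1 h2
  · rw [← EReal.coe_add, EReal.coe_le_coe_iff]
    exact hl t h1.1 h1.2
  · rw [← EReal.coe_add, EReal.coe_le_coe_iff]
    exact hr t h2.1 h2.2
  · simp

/-- closed form of the generalized Legendre spectrum of the double
parabola for the parabolic lift g_γ(h) = −γh². -/
theorem generalized_spectrum_double_parabola (γ : ℝ) (hγ : 0 ≤ γ) :
    ∀ h : ℝ,
      (-2 < h ∧ h < -(1 / (1 + γ)) →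
        concEnv (fun x => doubleParabola x + ((-γ * x^2 : ℝ) : EReal)) h
          - ((-γ * h^2 : ℝ) : EReal) = ((1 - (h + 1)^2 : ℝ) : EReal)) ∧
      (|h| ≤ 1 / (1 + γ) →
        concEnv (fun x => doubleParabola x + ((-γ * x^2 : ℝ) : EReal)) h
          - ((-γ * h^2 : ℝ) : EReal) = ((1 / (1 + γ) + γ * h^2 : ℝ) : EReal)) ∧
      (1 / (1 + γ) < h ∧ h < 2 →
        concEnv (fun x => doubleParabola x + ((-γ * x^2 : ℝ) : EReal)) h
          - ((-γ * h^2 : ℝ) : EReal) = ((1 - (h - 1)^2 : ℝ) : EReal)) := by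
  have hu : (0:ℝ) < 1 + γ := by linarith
  set a : ℝ := 1 / (1 + γ) with ha
  have ha0 : 0 < a := by positivity
  have ha1 : a ≤ 1 := by rw [ha, div_le_one hu]; linarith
  have haa : a * (1 + γ) = 1 := by rw [ha, one_div_mul_cancel hu.ne']
  intro h
  refine ⟨?_, ?_, ?_⟩
  · -- left region
    rintro ⟨h1, h2⟩
    have hha : (1 + γ) * h < -1 := by
      have := mul_lt_mul_of_pos_left h2 hu
      have e : (1 + γ) * -(1 / (1 + γ)) = -1 := by field_simp
      linarith [e ▸ this]
    have hh0 : h < 0 := by nlinarith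
    set m : ℝ := -2 * (1 + γ) * h - 2 with hm
    set c : ℝ := (1 + γ) * h ^ 2 with hc
    have maj := maj_of γ m c
      (fun t _ _ => by rw [hm, hc]; nlinarith [sq_nonneg (t - h)])
      (fun t ht0 _ => by
        rw [hm, hc]
        nlinarith [sq_nonneg ((1 + γ) * t - 1), mul_nonneg ht0 (by linarith : (0:ℝ) ≤ -(1 + γ) * h - 1),
          mul_nonneg (by linarith : (0:ℝ) ≤ -h) (by linarith : (0:ℝ) ≤ -(1 + γ) * h - 1),
          sq_nonneg ((1 + γ) * t - (1 + γ) * h), mul_pos hu hu])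
    have heq : concEnv (fun x => doubleParabola x + ((-γ * x^2 : ℝ) : EReal)) h
        = ((1 - (h + 1)^2 + -γ * h^2 : ℝ) : EReal) := by
      refine le_antisymm ?_ ?_
      · have := env_ub _ m c h maj
        have e : m * h + c = 1 - (h + 1)^2 + -γ * h^2 := by rw [hm, hc]; ring
        rwa [e] at this
      · have := env_lb (fun x => doubleParabola x + ((-γ * x^2 : ℝ) : EReal)) h
        rwa [dp_left γ h h1 hh0] at this
    rw [heq, ← EReal.coe_sub]
    norm_cast
    ring
  · -- middle region
    intro habs
    obtain ⟨hl, hr⟩ := abs_le.mp habs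
    have heq : concEnv (fun x => doubleParabola x + ((-γ * x^2 : ℝ) : EReal)) h
        = ((a : ℝ) : EReal) := by
      refine le_antisymm ?_ ?_
      · have maj := maj_of γ 0 a
          (fun t _ _ => by nlinarith [sq_nonneg ((1 + γ) * t + 1), mul_pos hu hu])
          (fun t _ _ => by nlinarith [sq_nonneg ((1 + γ) * t - 1), mul_pos hu hu])
        have := env_ub _ 0 a h maj
        rwa [show (0:ℝ) * h + a = a from by ring] at this
      · refine le_iInf ?_
        rintro ⟨⟨m, c⟩, maj⟩
        have e1 : doubleParabola (-a) + ((-γ * (-a)^2 : ℝ) : EReal)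
            ≤ ((m * (-a) + c : ℝ) : EReal) := maj (-a)
        rw [dp_left γ (-a) (by linarith) (by linarith), EReal.coe_le_coe_iff] at e1
        have e2 : doubleParabola a + ((-γ * a^2 : ℝ) : EReal)
            ≤ ((m * a + c : ℝ) : EReal) := maj a
        rw [dp_right γ a (le_of_lt ha0) (by linarith), EReal.coe_le_coe_iff] at e2
        have r1 : a ≤ m * (-a) + c := by nlinarith
        have r2 : a ≤ m * a + c := by nlinarith
        show ((a : ℝ) : EReal) ≤ ((m * h + c : ℝ) : EReal)
        rw [EReal.coe_le_coe_iff]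
        rcases le_total 0 m with hm | hm
        · nlinarith [mul_le_mul_of_nonneg_left hl hm]
        · nlinarith [mul_le_mul_of_nonpos_left hr hm]
    rw [heq, ← EReal.coe_sub]
    norm_cast
    rw [ha]; ring
  · -- right region
    rintro ⟨h1, h2⟩
    have hha : 1 < (1 + γ) * h := by
      have := mul_lt_mul_of_pos_left h1 hu
      have e : (1 + γ) * (1 / (1 + γ)) = 1 := by field_simp
      linarith [e ▸ this]
    have hh0 : 0 < h := by nlinarith
    set m : ℝ := -2 * (1 + γ) * h + 2 with hm
    set c : ℝ := (1 + γ) * h ^ 2 with hc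
    have maj := maj_of γ m c
      (fun t ht1 ht0 => by
        rw [hm, hc]
        nlinarith [sq_nonneg ((1 + γ) * t + 1), mul_nonneg (by linarith : (0:ℝ) ≤ -t) (by linarith : (0:ℝ) ≤ (1 + γ) * h - 1),
          mul_nonneg (le_of_lt hh0) (by linarith : (0:ℝ) ≤ (1 + γ) * h - 1),
          sq_nonneg ((1 + γ) * t - (1 + γ) * h), mul_pos hu hu])
      (fun t _ _ => by rw [hm, hc]; nlinarith [sq_nonneg (t - h)])
    have heq : concEnv (fun x => doubleParabola x + ((-γ * x^2 : ℝ) : EReal)) h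
        = ((1 - (h - 1)^2 + -γ * h^2 : ℝ) : EReal) := by
      refine le_antisymm ?_ ?_
      · have := env_ub _ m c h maj
        have e : m * h + c = 1 - (h - 1)^2 + -γ * h^2 := by rw [hm, hc]; ring
        rwa [e] at this
      · have := env_lb (fun x => doubleParabola x + ((-γ * x^2 : ℝ) : EReal)) h
        rwa [dp_right γ h (le_of_lt hh0) (le_of_lt h2)] at this
    rw [heq, ← EReal.coe_sub]
    norm_cast
    ring
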